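/- Let n ≥ 5 be odd, θ = π/n, and r = (cos θ)^{-1/2}. Then tan(π/4 − θ/4) < (1 − r² sin²(θ/2)) / (r² sin²(θ/2) + cos(θ/2)) < 1. -/

import Mathlib

private lemma aux_lower (σ γ c s : ℝ) (hσ0 : 0 < σ) (hσb : σ < 0.315)
    (hγ0 : 0 < γ) (hγ1 : γ ≤ 1) (hpyth : σ ^ 2 + γ ^ 2 = 1)
    (hc2 : c = 1 - 2 * σ ^ 2) (hc0 : 0 < c) (hsdef : s = c⁻¹ * σ ^ 2) :
    γ * (s + γ) < (1 - s) * (1 + σ) := by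
  have key : σ ^ 2 * (1 + σ + γ) < σ * (1 + σ) * c := by
    rw [hc2]
    nlinarith [mul_pos hσ0 hσ0, sq_nonneg σ, mul_pos (mul_pos hσ0 hσ0) hσ0]
  have hmul : s * (1 + σ + γ) * c < σ * (1 + σ) * c := by
    have h1 : s * (1 + σ + γ) * c = σ ^ 2 * (1 + σ + γ) := by
      rw [hsdef]; field_simp
    rw [h1]; exact key
  have h2 : s * (1 + σ + γ) < σ * (1 + σ) := (mul_lt_mul_iff_of_pos_right hc0).mp hmul
  nlinarith [h2, hpyth]

private lemma aux_upper (σ γ c s : ℝ) (hσ0 : 0 < σ)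
    (hγ0 : 0 < γ) (hγ1 : γ ≤ 1) (hpyth : σ ^ 2 + γ ^ 2 = 1)
    (hc0 : 0 < c) (hc1 : c < 1) (hsdef : s = c⁻¹ * σ ^ 2) :
    1 - s < s + γ := by
  have h1 : 1 - γ ≤ σ ^ 2 := by nlinarith
  have h2 : 2 * σ ^ 2 ≤ 2 * s := by
    rw [hsdef]
    have : (1:ℝ) ≤ c⁻¹ := (one_le_inv₀ hc0).mpr hc1.le
    nlinarith [sq_nonneg σ]
  nlinarith [sq_nonneg σ]

/-- for odd `n ≥ 5`, `θ = π/n` and `r = (cos θ)^{-1/2}`,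
`tan(π/4 − θ/4) < (1 − r² sin²(θ/2)) / (r² sin²(θ/2) + cos(θ/2)) < 1`. -/
theorem trig_tan_bound (n : ℕ) (hodd : Odd n) (hn : 5 ≤ n) :
    Real.tan (Real.pi / 4 - Real.pi / n / 4)
      < (1 - (Real.sqrt (Real.cos (Real.pi / n))⁻¹) ^ 2 * Real.sin (Real.pi / n / 2) ^ 2)
        / ((Real.sqrt (Real.cos (Real.pi / n))⁻¹) ^ 2 * Real.sin (Real.pi / n / 2) ^ 2
          + Real.cos (Real.pi / n / 2)) ∧
    (1 - (Real.sqrt (Real.cos (Real.pi / n))⁻¹) ^ 2 * Real.sin (Real.pi / n / 2) ^ 2)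
        / ((Real.sqrt (Real.cos (Real.pi / n))⁻¹) ^ 2 * Real.sin (Real.pi / n / 2) ^ 2
          + Real.cos (Real.pi / n / 2)) < 1 := by
  have hn0 : (0:ℝ) < n := by positivity
  have hn5 : (5:ℝ) ≤ n := by exact_mod_cast hn
  set θ : ℝ := Real.pi / n with hθdef
  have hθ0 : 0 < θ := div_pos Real.pi_pos hn0
  have hθ5 : θ ≤ Real.pi / 5 := by
    apply div_le_div_of_nonneg_left Real.pi_pos.le (by norm_num) hn5
  set x : ℝ := θ / 2 with hxdef
  have hx0 : 0 < x := by positivity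
  have hx10 : x ≤ Real.pi / 10 := by rw [hxdef]; linarith
  have hxb : x < 0.315 := by
    have := Real.pi_lt_d2
    calc x ≤ Real.pi / 10 := hx10
      _ < 0.315 := by linarith
  set σ : ℝ := Real.sin x with hσdef
  set γ : ℝ := Real.cos x with hγdef
  have hσ0 : 0 < σ := Real.sin_pos_of_pos_of_lt_pi hx0 (by nlinarith [Real.pi_gt_three])
  have hσb : σ < 0.315 := lt_of_le_of_lt (Real.sin_le hx0.le) hxb
  have hγ0 : 0 < γ := Real.cos_pos_of_mem_Ioo ⟨by nlinarith [Real.pi_gt_three], by nlinarith [Real.pi_gt_three]⟩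
  have hγ1 : γ ≤ 1 := Real.cos_le_one x
  have hpyth : σ ^ 2 + γ ^ 2 = 1 := Real.sin_sq_add_cos_sq x
  set c : ℝ := Real.cos θ with hcdef
  have hc2 : c = 1 - 2 * σ ^ 2 := by
    have hthx : θ = 2 * x := by rw [hxdef]; ring
    rw [hcdef, hthx, Real.cos_two_mul' x]
    nlinarith [hpyth]
  have hc0 : 0 < c := by nlinarith
  have hc1 : c < 1 := by nlinarith
  have hsq : (Real.sqrt (Real.cos (Real.pi / n))⁻¹) ^ 2 = c⁻¹ := by
    rw [Real.sq_sqrt (by positivity)]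
  rw [hsq]
  clear_value θ x σ γ c
  set s : ℝ := c⁻¹ * σ ^ 2 with hsdef
  have hs0 : 0 < s := by positivity
  have hD : 0 < s + γ := by positivity
  constructor
  · -- lower bound
    have htan : Real.tan (Real.pi / 4 - θ / 4) = γ / (1 + σ) := by
      have hy : Real.pi / 4 - θ / 4 = Real.pi / 4 - x / 2 := by
        rw [hxdef]; ring
      set y : ℝ := Real.pi / 4 - x / 2 with hydef
      have hcy : 0 < Real.cos y := by
        apply Real.cos_pos_of_mem_Ioo
        rw [hydef, Set.mem_Ioo]
        constructor
        · linarith [Real.pi_gt_three]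
        · linarith [Real.pi_gt_three]
      have h2y : 2 * y = Real.pi / 2 - x := by rw [hydef]; ring
      have hsin2y : Real.sin (2 * y) = γ := by
        rw [h2y, Real.sin_pi_div_two_sub]; exact hγdef.symm
      have hcos2y : Real.cos (2 * y) = σ := by
        rw [h2y, Real.cos_pi_div_two_sub]; exact hσdef.symm
      rw [hy, Real.tan_eq_sin_div_cos]
      rw [Real.sin_two_mul] at hsin2y
      rw [Real.cos_two_mul] at hcos2y
      have h1σ : (1:ℝ) + σ = 2 * Real.cos y ^ 2 := by linarith
      rw [h1σ, ← hsin2y]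
      field_simp [ne_of_gt hcy]
    rw [htan, div_lt_div_iff₀ (by linarith) hD]
    exact aux_lower σ γ c s hσ0 hσb hγ0 hγ1 hpyth hc2 hc0 hsdef
  · rw [div_lt_one hD]
    exact aux_upper σ γ c s hσ0 hγ0 hγ1 hpyth hc0 hc1 hsdef
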